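/- Suppose (X_n), (X_n'), (Y_n), (Y_n') are sequences of random elements of measurable spaces E_1, E_2 on a common probability space such that (1) X_n' and Y_n' are independent for each n, and (2) P{X_n ≠ X_n'} → 0 and P{Y_n ≠ Y_n'} → 0 as n → ∞. Then ||P_{(X_n,Y_n)} − P_{X_n} × P_{Y_n}||_var → 0. -/

import Mathlib

open MeasureTheory Filter

open scoped ENNReal

/-- If two random elements differ with small probability, their laws are close on every
measurable set. -/
lemma aux_map_apply_le {Ω E : Type*} [MeasurableSpace Ω] [MeasurableSpace E]
    (P : Measure Ω) {f g : Ω → E} (hf : Measurable f) (hg : Measurable g)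
    {A : Set E} (hA : MeasurableSet A) :
    P.map f A ≤ P.map g A + P {ω | f ω ≠ g ω} := by
  rw [Measure.map_apply hf hA, Measure.map_apply hg hA]
  calc P (f ⁻¹' A) ≤ P (f ⁻¹' A ∩ g ⁻¹' A) + P (f ⁻¹' A \ g ⁻¹' A) :=
        measure_le_inter_add_diff _ _ _
    _ ≤ P (g ⁻¹' A) + P {ω | f ω ≠ g ω} := by
        gcongr
        · exact Set.inter_subset_right
        · intro ω hω
          exact fun h => hω.2 (by simpa [Set.mem_preimage, ← h] using hω.1)

/-- Total variation bound from a uniform bound on the difference on measurable sets. -/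
lemma aux_tv_le {E : Type*} [MeasurableSpace E] (μ ν : Measure E)
    [IsFiniteMeasure μ] [IsFiniteMeasure ν] (ε : ℝ≥0∞) (hε : ε ≠ ∞)
    (h1 : ∀ A : Set E, MeasurableSet A → μ A ≤ ν A + ε)
    (h2 : ∀ A : Set E, MeasurableSet A → ν A ≤ μ A + ε) :
    (μ.toSignedMeasure - ν.toSignedMeasure).totalVariation Set.univ ≤ 2 * ε := by
  set s : SignedMeasure E := μ.toSignedMeasure - ν.toSignedMeasure with hs
  obtain ⟨i, hi₁, hi₂, hi₃, hpos, hneg⟩ := s.toJordanDecomposition_spec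
  have key : ∀ j : Set E, MeasurableSet j → s j ≤ ε.toReal := by
    intro j hj
    have h := h1 j hj
    have hfin : ν j + ε ≠ ∞ := ENNReal.add_ne_top.2 ⟨measure_ne_top _ _, hε⟩
    have := ENNReal.toReal_mono hfin h
    rw [ENNReal.toReal_add (measure_ne_top _ _) hε] at this
    rw [hs, VectorMeasure.sub_apply, Measure.toSignedMeasure_apply_measurable hj,
      Measure.toSignedMeasure_apply_measurable hj]
    rw [measureReal_def, measureReal_def]
    linarith
  have key' : ∀ j : Set E, MeasurableSet j → -s j ≤ ε.toReal := by
    intro j hj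
    have h := h2 j hj
    have hfin : μ j + ε ≠ ∞ := ENNReal.add_ne_top.2 ⟨measure_ne_top _ _, hε⟩
    have := ENNReal.toReal_mono hfin h
    rw [ENNReal.toReal_add (measure_ne_top _ _) hε] at this
    rw [hs, VectorMeasure.sub_apply, Measure.toSignedMeasure_apply_measurable hj,
      Measure.toSignedMeasure_apply_measurable hj]
    rw [measureReal_def, measureReal_def]
    linarith
  have hposle : s.toJordanDecomposition.posPart Set.univ ≤ ε := by
    rw [hpos, SignedMeasure.toMeasureOfZeroLE_apply _ hi₂ hi₁ MeasurableSet.univ]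
    rw [← ENNReal.coe_toNNReal hε, ENNReal.coe_le_coe, ← NNReal.coe_le_coe]
    simpa [ENNReal.coe_toNNReal_eq_toReal] using key _ (hi₁.inter MeasurableSet.univ)
  have hnegle : s.toJordanDecomposition.negPart Set.univ ≤ ε := by
    rw [hneg, SignedMeasure.toMeasureOfLEZero_apply _ hi₃ hi₁.compl MeasurableSet.univ]
    rw [← ENNReal.coe_toNNReal hε, ENNReal.coe_le_coe, ← NNReal.coe_le_coe]
    simpa [ENNReal.coe_toNNReal_eq_toReal] using key' _ (hi₁.compl.inter MeasurableSet.univ)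
  calc s.totalVariation Set.univ
      = s.toJordanDecomposition.posPart Set.univ
        + s.toJordanDecomposition.negPart Set.univ := rfl
    _ ≤ ε + ε := add_le_add hposle hnegle
    _ = 2 * ε := (two_mul ε).symm

theorem stmt_1 {Ω E₁ E₂ : Type*} [MeasurableSpace Ω]
    [MeasurableSpace E₁] [MeasurableSpace E₂]
    (P : Measure Ω) [IsProbabilityMeasure P]
    (X X' : ℕ → Ω → E₁) (Y Y' : ℕ → Ω → E₂)
    (hX : ∀ n, Measurable (X n)) (hX' : ∀ n, Measurable (X' n))
    (hY : ∀ n, Measurable (Y n)) (hY' : ∀ n, Measurable (Y' n))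
    (hindep : ∀ n, ProbabilityTheory.IndepFun (X' n) (Y' n) P)
    (hXX' : Tendsto (fun n => P {ω | X n ω ≠ X' n ω}) atTop (nhds 0))
    (hYY' : Tendsto (fun n => P {ω | Y n ω ≠ Y' n ω}) atTop (nhds 0)) :
    Tendsto (fun n =>
        ((P.map (fun ω => (X n ω, Y n ω))).toSignedMeasure
          - ((P.map (X n)).prod (P.map (Y n))).toSignedMeasure).totalVariation Set.univ)
      atTop (nhds 0) := by
  set a : ℕ → ℝ≥0∞ := fun n => P {ω | X n ω ≠ X' n ω} with ha
  set b : ℕ → ℝ≥0∞ := fun n => P {ω | Y n ω ≠ Y' n ω} with hb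
  have key : ∀ n, ((P.map (fun ω => (X n ω, Y n ω))).toSignedMeasure
      - ((P.map (X n)).prod (P.map (Y n))).toSignedMeasure).totalVariation Set.univ
      ≤ 4 * (a n + b n) := by
    intro n
    have hab_ne : a n + b n ≠ ∞ :=
      ENNReal.add_ne_top.2 ⟨measure_ne_top _ _, measure_ne_top _ _⟩
    -- the law of (X', Y') is the product of marginals, by independence
    have hind : P.map (fun ω => (X' n ω, Y' n ω)) = (P.map (X' n)).prod (P.map (Y' n)) :=
      (ProbabilityTheory.indepFun_iff_map_prod_eq_prod_map_map (hX' n).aemeasurable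
        (hY' n).aemeasurable).1 (hindep n)
    -- comparison of the joint laws of (X,Y) and (X',Y')
    have step1 : ∀ A : Set (E₁ × E₂), MeasurableSet A →
        P.map (fun ω => (X n ω, Y n ω)) A
          ≤ P.map (fun ω => (X' n ω, Y' n ω)) A + (a n + b n) ∧
        P.map (fun ω => (X' n ω, Y' n ω)) A
          ≤ P.map (fun ω => (X n ω, Y n ω)) A + (a n + b n) := by
      intro A hA
      have hsub : {ω | (X n ω, Y n ω) ≠ (X' n ω, Y' n ω)}
          ⊆ {ω | X n ω ≠ X' n ω} ∪ {ω | Y n ω ≠ Y' n ω} := by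
        intro ω hω
        by_contra h
        simp only [Set.mem_union, Set.mem_setOf_eq, not_or] at h
        push_neg at h
        exact hω (Prod.ext h.1 h.2)
      have hP : P {ω | (X n ω, Y n ω) ≠ (X' n ω, Y' n ω)} ≤ a n + b n :=
        (measure_mono hsub).trans (measure_union_le _ _)
      have hsub' : {ω | (X' n ω, Y' n ω) ≠ (X n ω, Y n ω)}
          ⊆ {ω | X n ω ≠ X' n ω} ∪ {ω | Y n ω ≠ Y' n ω} := by
        intro ω hω; exact hsub (Ne.symm hω)
      have hP' : P {ω | (X' n ω, Y' n ω) ≠ (X n ω, Y n ω)} ≤ a n + b n :=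
        (measure_mono hsub').trans (measure_union_le _ _)
      constructor
      · exact (aux_map_apply_le P ((hX n).prodMk (hY n)) ((hX' n).prodMk (hY' n)) hA).trans
          (by gcongr)
      · exact (aux_map_apply_le P ((hX' n).prodMk (hY' n)) ((hX n).prodMk (hY n)) hA).trans
          (by gcongr)
    -- comparison of the two product measures, via the product space Ω × Ω
    have hprod : (P.map (X n)).prod (P.map (Y n))
        = (P.prod P).map (Prod.map (X n) (Y n)) :=
      Measure.map_prod_map P P (hX n) (hY n)
    have hprod' : (P.map (X' n)).prod (P.map (Y' n))
        = (P.prod P).map (Prod.map (X' n) (Y' n)) :=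
      Measure.map_prod_map P P (hX' n) (hY' n)
    have hPP : ∀ p : (Ω → E₁) × (Ω → E₁), ∀ q : (Ω → E₂) × (Ω → E₂),
        (p.1 = X n ∧ p.2 = X' n ∨ p.1 = X' n ∧ p.2 = X n) →
        (q.1 = Y n ∧ q.2 = Y' n ∨ q.1 = Y' n ∧ q.2 = Y n) →
        (P.prod P) {z : Ω × Ω | Prod.map p.1 q.1 z ≠ Prod.map p.2 q.2 z} ≤ a n + b n := by
      intro p q hp hq
      have hsub : {z : Ω × Ω | Prod.map p.1 q.1 z ≠ Prod.map p.2 q.2 z}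
          ⊆ ({ω | X n ω ≠ X' n ω} ×ˢ Set.univ) ∪ (Set.univ ×ˢ {ω | Y n ω ≠ Y' n ω}) := by
        intro z hz
        by_contra h
        simp only [Set.mem_union, Set.mem_prod, Set.mem_setOf_eq, Set.mem_univ, and_true,
          true_and, not_or] at h
        push_neg at h
        apply hz
        have h1 : p.1 z.1 = p.2 z.1 := by
          rcases hp with ⟨e1, e2⟩ | ⟨e1, e2⟩ <;> rw [e1, e2]
          · exact h.1
          · exact h.1.symm
        have h2 : q.1 z.2 = q.2 z.2 := by
          rcases hq with ⟨e1, e2⟩ | ⟨e1, e2⟩ <;> rw [e1, e2]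
          · exact h.2
          · exact h.2.symm
        simp [Prod.map, h1, h2]
      calc (P.prod P) {z : Ω × Ω | Prod.map p.1 q.1 z ≠ Prod.map p.2 q.2 z}
          ≤ (P.prod P) (({ω | X n ω ≠ X' n ω} ×ˢ Set.univ)
              ∪ (Set.univ ×ˢ {ω | Y n ω ≠ Y' n ω})) := measure_mono hsub
        _ ≤ (P.prod P) ({ω | X n ω ≠ X' n ω} ×ˢ Set.univ)
              + (P.prod P) (Set.univ ×ˢ {ω | Y n ω ≠ Y' n ω}) := measure_union_le _ _
        _ = a n + b n := by
            rw [Measure.prod_prod, Measure.prod_prod, measure_univ, mul_one, one_mul]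
    have step2 : ∀ A : Set (E₁ × E₂), MeasurableSet A →
        (P.map (X' n)).prod (P.map (Y' n)) A
          ≤ (P.map (X n)).prod (P.map (Y n)) A + (a n + b n) ∧
        (P.map (X n)).prod (P.map (Y n)) A
          ≤ (P.map (X' n)).prod (P.map (Y' n)) A + (a n + b n) := by
      intro A hA
      rw [hprod, hprod']
      constructor
      · exact (aux_map_apply_le (P.prod P) ((hX' n).prodMap (hY' n))
          ((hX n).prodMap (hY n)) hA).trans
          (by gcongr; exact hPP (X' n, X n) (Y' n, Y n) (Or.inr ⟨rfl, rfl⟩) (Or.inr ⟨rfl, rfl⟩))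
      · exact (aux_map_apply_le (P.prod P) ((hX n).prodMap (hY n))
          ((hX' n).prodMap (hY' n)) hA).trans
          (by gcongr; exact hPP (X n, X' n) (Y n, Y' n) (Or.inl ⟨rfl, rfl⟩) (Or.inl ⟨rfl, rfl⟩))
    have h1 : ∀ A : Set (E₁ × E₂), MeasurableSet A →
        P.map (fun ω => (X n ω, Y n ω)) A
          ≤ (P.map (X n)).prod (P.map (Y n)) A + 2 * (a n + b n) := by
      intro A hA
      calc P.map (fun ω => (X n ω, Y n ω)) A
          ≤ P.map (fun ω => (X' n ω, Y' n ω)) A + (a n + b n) := (step1 A hA).1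
        _ = (P.map (X' n)).prod (P.map (Y' n)) A + (a n + b n) := by rw [hind]
        _ ≤ ((P.map (X n)).prod (P.map (Y n)) A + (a n + b n)) + (a n + b n) := by
            gcongr; exact (step2 A hA).1
        _ = (P.map (X n)).prod (P.map (Y n)) A + 2 * (a n + b n) := by
            rw [add_assoc, two_mul]
    have h2 : ∀ A : Set (E₁ × E₂), MeasurableSet A →
        (P.map (X n)).prod (P.map (Y n)) A
          ≤ P.map (fun ω => (X n ω, Y n ω)) A + 2 * (a n + b n) := by
      intro A hA
      calc (P.map (X n)).prod (P.map (Y n)) A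
          ≤ (P.map (X' n)).prod (P.map (Y' n)) A + (a n + b n) := (step2 A hA).2
        _ = P.map (fun ω => (X' n ω, Y' n ω)) A + (a n + b n) := by rw [hind]
        _ ≤ (P.map (fun ω => (X n ω, Y n ω)) A + (a n + b n)) + (a n + b n) := by
            gcongr; exact (step1 A hA).2
        _ = P.map (fun ω => (X n ω, Y n ω)) A + 2 * (a n + b n) := by
            rw [add_assoc, two_mul]
    have := aux_tv_le (P.map (fun ω => (X n ω, Y n ω)))
      ((P.map (X n)).prod (P.map (Y n))) (2 * (a n + b n))
      (ENNReal.mul_ne_top (by norm_num) hab_ne) h1 h2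
    calc ((P.map (fun ω => (X n ω, Y n ω))).toSignedMeasure
          - ((P.map (X n)).prod (P.map (Y n))).toSignedMeasure).totalVariation Set.univ
        ≤ 2 * (2 * (a n + b n)) := this
      _ = 4 * (a n + b n) := by rw [← mul_assoc]; norm_num
  have hlim : Tendsto (fun n => 4 * (a n + b n)) atTop (nhds 0) := by
    have h0 : Tendsto (fun n => a n + b n) atTop (nhds (0 + 0)) := hXX'.add hYY'
    rw [add_zero] at h0
    have h4 : Tendsto (fun n => (4 : ℝ≥0∞) * (a n + b n)) atTop (nhds (4 * 0)) :=
      ENNReal.Tendsto.const_mul h0 (Or.inr (by norm_num))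
    simpa using h4
  exact tendsto_of_tendsto_of_tendsto_of_le_of_le tendsto_const_nhds hlim
    (fun n => zero_le) key
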